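/- For any a > 0 and x ∈ ℝ², the convolution of the kernel 1/(2π|·|) with the Gaussian e^{-|·|²/a} satisfies ∫_{ℝ²} e^{-|y|²/a}/(2π|x−y|) dy = (√(πa)/2) e^{-r} I₀(r), where r = |x|²/(2a) and I₀ is the modified Bessel function of the first kind of order 0. -/

import Mathlib

open MeasureTheory Real intervalIntegral

/-- The modified Bessel function of the first kind of order zero,
`I₀(r) = (1/π) ∫₀^π e^{r cos θ} dθ`. -/
noncomputable def besselI0 (r : ℝ) : ℝ :=
  (1 / Real.pi) * ∫ θ in (0:ℝ)..Real.pi, Real.exp (r * Real.cos θ)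

open Set

/-- The integrand in polar coordinates (with the Jacobian factor cancelled against `1/|y|`). -/
noncomputable def Efun (a R : ℝ) : ℝ × ℝ → ℝ :=
  fun p => rexp (-((R - p.1 * Real.cos p.2) ^ 2 + (p.1 * Real.sin p.2) ^ 2) / a)

lemma Efun_cont (a R : ℝ) : Continuous (Efun a R) := by unfold Efun; fun_prop

lemma Efun_bound (a R : ℝ) (ha : 0 < a) (p : ℝ × ℝ) :
    Efun a R p ≤ rexp (2 * R ^ 2 / a) * rexp (-(1 / (2 * a)) * p.1 ^ 2) := by
  rw [Efun, ← Real.exp_add, Real.exp_le_exp]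
  have h1 : Real.cos p.2 ^ 2 + Real.sin p.2 ^ 2 = 1 := Real.cos_sq_add_sin_sq p.2
  rw [div_add' _ _ _ ha.ne', div_le_div_iff_of_pos_right ha]
  have h2 : -(1/(2*a)) * p.1 ^ 2 * a = -(p.1^2/2) := by field_simp
  rw [h2]
  nlinarith [sq_nonneg (2*R - p.1), sq_nonneg (2*R + p.1), sq_nonneg (p.1 * Real.sin p.2),
    neg_one_le_cos p.2, Real.cos_le_one p.2, sq_nonneg p.1, sq_nonneg R]

lemma Efun_integrable (a R : ℝ) (ha : 0 < a) (s t : Set ℝ) (ht : volume t ≠ ⊤) :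
    Integrable (Efun a R) ((volume.restrict s).prod (volume.restrict t)) := by
  have hb : Integrable (fun p : ℝ × ℝ => (rexp (2*R^2/a) * rexp (-(1/(2*a)) * p.1^2)) * (1:ℝ))
      ((volume.restrict s).prod (volume.restrict t)) := by
    exact Integrable.mul_prod (f := fun ρ : ℝ => rexp (2*R^2/a) * rexp (-(1/(2*a)) * ρ^2))
      (g := fun _ : ℝ => (1:ℝ))
      (((integrable_exp_neg_mul_sq (show 0 < 1/(2*a) by positivity)).const_mul _).restrict)
      (integrableOn_const ht)
  refine hb.mono (Efun_cont a R).aestronglyMeasurable (ae_of_all _ fun p => ?_)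
  show ‖Efun a R p‖ ≤ _
  rw [mul_one, Real.norm_of_nonneg (by rw [Efun]; positivity),
    Real.norm_of_nonneg (by positivity : (0:ℝ) ≤ rexp (2 * R ^ 2 / a) * rexp (-(1 / (2 * a)) * p.1 ^ 2))]
  exact Efun_bound a R ha p

lemma exp_cos_intervalIntegrable (r a b : ℝ) :
    IntervalIntegrable (fun u => rexp (r * Real.cos u)) volume a b :=
  (Continuous.intervalIntegrable (by fun_prop) a b)

lemma integral_exp_cos_two_mul (r : ℝ) :
    ∫ θ in (0:ℝ)..π, rexp (r * Real.cos (2*θ)) = π * besselI0 r := by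
  have h3 : ∫ u in π..(2*π), rexp (r * Real.cos u) = ∫ u in (0:ℝ)..π, rexp (r * Real.cos u) := by
    have h := intervalIntegral.integral_comp_sub_left (a := 0) (b := π)
      (fun u => rexp (r * Real.cos u)) (2*π)
    simp only [sub_zero, Real.cos_two_pi_sub] at h
    rw [show 2*π - π = π by ring] at h
    exact h.symm
  have h2 : (∫ θ in (0:ℝ)..π, rexp (r * Real.cos (2*θ)))
      = (2:ℝ)⁻¹ • ∫ u in (0:ℝ)..(2*π), rexp (r * Real.cos u) := by
    rw [intervalIntegral.integral_comp_mul_left (fun u => rexp (r * Real.cos u)) two_ne_zero]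
    norm_num
  have h4 : ∫ u in (0:ℝ)..(2*π), rexp (r * Real.cos u)
      = 2 * ∫ u in (0:ℝ)..π, rexp (r * Real.cos u) := by
    rw [← intervalIntegral.integral_add_adjacent_intervals (b := π)
      (exp_cos_intervalIntegrable r 0 π) (exp_cos_intervalIntegrable r π (2*π)), h3]
    ring
  rw [h2, h4, smul_eq_mul, ← mul_assoc]
  norm_num
  rw [besselI0, ← mul_assoc, mul_one_div, div_self pi_ne_zero, one_mul]

lemma gauss_shift (a : ℝ) (ha : 0 < a) (c : ℝ) :
    ∫ ρ : ℝ, rexp (-((ρ - c)^2) / a) = Real.sqrt (π * a) := by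
  calc ∫ ρ : ℝ, rexp (-((ρ - c)^2) / a)
      = ∫ ρ : ℝ, rexp (-(1/a) * (ρ - c)^2) := by congr 1; ext ρ; congr 1; ring
    _ = ∫ ρ : ℝ, rexp (-(1/a) * ρ^2) :=
        integral_sub_right_eq_self (fun t : ℝ => rexp (-(1/a) * t^2)) c
    _ = Real.sqrt (π / (1/a)) := integral_gaussian _
    _ = Real.sqrt (π * a) := by rw [one_div, div_eq_mul_inv, inv_inv]

lemma key (a : ℝ) (ha : 0 < a) (R : ℝ) :
    (∫ w : ℂ, rexp (-‖w‖ ^ 2 / a) / (2 * π * ‖(R : ℂ) - w‖))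
      = (Real.sqrt (π * a) / 2) * rexp (-(R ^ 2 / (2 * a))) * besselI0 (R ^ 2 / (2 * a)) := by
  have hIoo_ne : (volume (Ioo (-π) π) ≠ ⊤) := by simp [Real.volume_Ioo]
  have hIoo0_ne : (volume (Ioo (0:ℝ) π) ≠ ⊤) := by simp [Real.volume_Ioo]
  have hcont : ∀ ρ : ℝ, Continuous fun θ => Efun a R (ρ, θ) :=
    fun ρ => (Efun_cont a R).comp (Continuous.prodMk_right ρ)
  -- Step 1 : translation
  have step1 : (∫ w : ℂ, rexp (-‖w‖ ^ 2 / a) / (2 * π * ‖(R : ℂ) - w‖))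
      = ∫ w : ℂ, rexp (-‖(R : ℂ) - w‖ ^ 2 / a) / (2 * π * ‖w‖) := by
    rw [← integral_sub_left_eq_self
      (fun w : ℂ => rexp (-‖w‖ ^ 2 / a) / (2 * π * ‖(R : ℂ) - w‖)) volume ((R : ℂ))]
    congr 1; ext w; simp only [sub_sub_cancel]
  rw [step1, ← Complex.integral_comp_polarCoord_symm]
  -- Step 3 : rewrite integrand on the target
  rw [polarCoord_target]
  have hEq : EqOn
      (fun p : ℝ × ℝ => p.1 • ((fun w : ℂ => rexp (-‖(R : ℂ) - w‖ ^ 2 / a) / (2 * π * ‖w‖))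
        (Complex.polarCoord.symm p)))
      (fun p : ℝ × ℝ => (2*π)⁻¹ * Efun a R p) (Ioi (0:ℝ) ×ˢ Ioo (-π) π) := by
    intro p hp
    have hp1 : 0 < p.1 := hp.1
    have hnorm : ‖Complex.polarCoord.symm p‖ = p.1 := by
      rw [Complex.norm_polarCoord_symm, abs_of_pos hp1]
    have hsq : ‖(R:ℂ) - Complex.polarCoord.symm p‖^2
        = (R - p.1 * Real.cos p.2)^2 + (p.1 * Real.sin p.2)^2 := by
      rw [Complex.sq_norm, Complex.normSq_apply,
        Complex.polarCoord_symm_apply]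
      simp [Complex.cos_ofReal_re, Complex.sin_ofReal_re]
      ring
    dsimp only
    rw [hnorm, hsq, smul_eq_mul, Efun]
    field_simp
  rw [setIntegral_congr_fun (measurableSet_Ioi.prod measurableSet_Ioo) hEq]
  -- Step 4 : iterate
  have hInt : IntegrableOn (fun p : ℝ × ℝ => (2*π)⁻¹ * Efun a R p)
      (Ioi (0:ℝ) ×ˢ Ioo (-π) π) (volume.prod volume) := by
    rw [IntegrableOn, ← Measure.prod_restrict]
    exact (Efun_integrable a R ha _ _ hIoo_ne).const_mul _
  rw [Measure.volume_eq_prod, setIntegral_prod _ hInt]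
  simp_rw [MeasureTheory.integral_const_mul]
  -- Step 5 : symmetrize the angular integral
  have inner2 : ∀ ρ : ℝ, (∫ θ in Ioo (-π) π, Efun a R (ρ,θ))
      = 2 * ∫ θ in Ioo (0:ℝ) π, Efun a R (ρ,θ) := by
    intro ρ
    rw [← integral_Ioc_eq_integral_Ioo, ← integral_Ioc_eq_integral_Ioo,
        ← intervalIntegral.integral_of_le (by linarith [pi_pos] : -π ≤ π),
        ← intervalIntegral.integral_of_le pi_pos.le,
        ← intervalIntegral.integral_add_adjacent_intervals (b := (0:ℝ))
          ((hcont ρ).intervalIntegrable _ _) ((hcont ρ).intervalIntegrable _ _)]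
    have hneg := intervalIntegral.integral_comp_neg (a := (0:ℝ)) (b := π)
      (fun θ => Efun a R (ρ, θ))
    simp only [neg_zero] at hneg
    have heq : ∀ x : ℝ, Efun a R (ρ, -x) = Efun a R (ρ, x) := by
      intro x; unfold Efun; simp [Real.cos_neg, Real.sin_neg, mul_neg, neg_sq]
    simp only [heq] at hneg
    rw [← hneg]; ring
  simp_rw [inner2]
  -- Step 5b : evenness in ρ
  set G : ℝ → ℝ := fun ρ => ∫ θ in Ioo (0:ℝ) π, Efun a R (ρ,θ) with hG
  have hGint : Integrable G := by
    have h := Efun_integrable a R ha univ (Ioo 0 π) hIoo0_ne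
    rw [Measure.restrict_univ] at h
    exact h.integral_prod_left
  have hconv : ∀ ρ : ℝ, G ρ = ∫ θ in (0:ℝ)..π, Efun a R (ρ,θ) := fun ρ => by
    rw [hG]; rw [intervalIntegral.integral_of_le pi_pos.le, integral_Ioc_eq_integral_Ioo]
  have hGeven : ∀ ρ, G (-ρ) = G ρ := by
    intro ρ
    rw [hconv, hconv]
    have h := intervalIntegral.integral_comp_sub_left (a := (0:ℝ)) (b := π)
      (fun θ => Efun a R (ρ, θ)) π
    simp only [sub_zero, sub_self] at h
    have heq : ∀ x : ℝ, Efun a R (-ρ, x) = Efun a R (ρ, π - x) := by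
      intro x; unfold Efun
      simp only [Real.cos_pi_sub, Real.sin_pi_sub, mul_neg, neg_mul]; ring_nf
    simp only [heq]
    rw [h]
  have hsym : ∫ ρ in Ioi (0:ℝ), 2 * G ρ = ∫ ρ : ℝ, G ρ := by
    rw [← integral_Iic_add_Ioi hGint.integrableOn hGint.integrableOn]
    have h := integral_comp_neg_Ioi 0 G
    simp only [neg_zero, hGeven] at h
    rw [MeasureTheory.integral_const_mul, ← h, two_mul]
  rw [hsym]
  -- Step 6 : Fubini swap
  have hswap : ∫ ρ : ℝ, G ρ = ∫ θ in Ioo (0:ℝ) π, ∫ ρ : ℝ, Efun a R (ρ, θ) := by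
    apply integral_integral_swap
    have h := Efun_integrable a R ha univ (Ioo 0 π) hIoo0_ne
    rw [Measure.restrict_univ] at h
    exact h
  rw [hswap]
  -- Step 7 : Gaussian integral in ρ
  have hgauss : ∀ θ : ℝ, (∫ ρ : ℝ, Efun a R (ρ, θ))
      = Real.sqrt (π * a) * rexp (-(R^2 * Real.sin θ^2) / a) := by
    intro θ
    have hfac : ∀ ρ : ℝ, Efun a R (ρ, θ)
        = rexp (-((ρ - R * Real.cos θ)^2) / a) * rexp (-(R^2 * Real.sin θ^2) / a) := by
      intro ρ; unfold Efun; rw [← Real.exp_add, ← add_div]; congr 1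
      have h1 := Real.cos_sq_add_sin_sq θ
      congr 1
      linear_combination (R^2 - ρ^2) * h1
    simp_rw [hfac]
    rw [MeasureTheory.integral_mul_const, gauss_shift a ha (R * Real.cos θ), mul_comm]
  rw [setIntegral_congr_fun measurableSet_Ioo (fun θ _ => hgauss θ)]
  rw [MeasureTheory.integral_const_mul]
  -- Step 8 : final angular integral
  have hfin : (∫ θ in Ioo (0:ℝ) π, rexp (-(R^2 * Real.sin θ^2) / a))
      = rexp (-(R^2/(2*a))) * (π * besselI0 (R^2/(2*a))) := by
    rw [← integral_Ioc_eq_integral_Ioo, ← intervalIntegral.integral_of_le pi_pos.le]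
    have heq : ∀ θ : ℝ, rexp (-(R^2 * Real.sin θ^2)/a)
        = rexp (-(R^2/(2*a))) * rexp ((R^2/(2*a)) * Real.cos (2*θ)) := by
      intro θ
      rw [← Real.exp_add]; congr 1
      rw [Real.sin_sq_eq_half_sub]
      field_simp; ring
    simp_rw [heq]
    rw [intervalIntegral.integral_const_mul, integral_exp_cos_two_mul]
  rw [hfin]
  field_simp

lemma rot_reduce (a : ℝ) (c : ℂ) :
    (∫ w : ℂ, rexp (-‖w‖ ^ 2 / a) / (2 * π * ‖c - w‖))
      = ∫ w : ℂ, rexp (-‖w‖ ^ 2 / a) / (2 * π * ‖((‖c‖ : ℝ) : ℂ) - w‖) := by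
  rcases eq_or_ne c 0 with rfl | hc
  · simp
  set u : Circle := Circle.exp (Complex.arg c) with hu
  have hcu : (u : ℂ) * (‖c‖ : ℂ) = c := by
    rw [hu, Circle.coe_exp, mul_comm]
    exact Complex.norm_mul_exp_arg_mul_I c
  have hmp := (_root_.rotation u).measurePreserving
  have h := hmp.integral_comp (_root_.rotation u).toMeasurableEquiv.measurableEmbedding
    (fun w : ℂ => rexp (-‖w‖ ^ 2 / a) / (2 * π * ‖c - w‖))
  rw [← h]
  congr 1
  ext w
  have h1 : ‖(_root_.rotation u) w‖ = ‖w‖ := (_root_.rotation u).norm_map w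
  have h2 : ‖c - (_root_.rotation u) w‖ = ‖((‖c‖ : ℝ) : ℂ) - w‖ := by
    rw [rotation_apply, ← hcu, ← mul_sub, norm_mul]
    simp [Circle.norm_coe]
  rw [h1, h2]

lemma transfer (a : ℝ) (x : EuclideanSpace ℝ (Fin 2)) :
    (∫ y : EuclideanSpace ℝ (Fin 2), rexp (-‖y‖ ^ 2 / a) / (2 * π * ‖x - y‖))
      = ∫ w : ℂ, rexp (-‖w‖ ^ 2 / a) / (2 * π * ‖Complex.orthonormalBasisOneI.repr.symm x - w‖) := by
  set L : ℂ ≃ₗᵢ[ℝ] EuclideanSpace ℝ (Fin 2) := Complex.orthonormalBasisOneI.repr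
  have h := (L.measurePreserving).integral_comp L.toMeasurableEquiv.measurableEmbedding
    (fun y : EuclideanSpace ℝ (Fin 2) => rexp (-‖y‖ ^ 2 / a) / (2 * π * ‖x - y‖))
  rw [← h]
  congr 1
  ext w
  have h1 : ‖L w‖ = ‖w‖ := L.norm_map w
  have h2 : ‖x - L w‖ = ‖L.symm x - w‖ := by
    have : x - L w = L (L.symm x - w) := by
      rw [map_sub, L.apply_symm_apply]
    rw [this, L.norm_map]
  rw [h1, h2]

/-- The convolution of `1/(2π|·|)` with the Gaussian `e^{-|·|²/a}` in 2D equals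
`(√(πa)/2) e^{-r} I₀(r)` with `r = |x|²/(2a)`. -/
theorem coulomb2d_gaussian_convolution (a : ℝ) (ha : 0 < a) (x : EuclideanSpace ℝ (Fin 2)) :
    (∫ y : EuclideanSpace ℝ (Fin 2),
        Real.exp (-‖y‖ ^ 2 / a) / (2 * Real.pi * ‖x - y‖))
      = (Real.sqrt (Real.pi * a) / 2) * Real.exp (-(‖x‖ ^ 2 / (2 * a)))
          * besselI0 (‖x‖ ^ 2 / (2 * a)) := by
  rw [transfer a x, rot_reduce a _]
  have hn : ‖Complex.orthonormalBasisOneI.repr.symm x‖ = ‖x‖ :=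
    Complex.orthonormalBasisOneI.repr.symm.norm_map x
  rw [hn]
  exact key a ha ‖x‖
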